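/- For n ≥ 2, an oriented star K⃗_{1,n} is {1,2}-antimagic if and only if n = 2 and its center is neither a source nor a sink. -/

import Mathlib

/-- `relPow A k u v` : there is a directed walk of length `k` from `u` to `v`
along the arc relation `A`. -/
def relPow {V : Type*} (A : V → V → Prop) : ℕ → V → V → Prop
  | 0 => fun u v => u = v
  | k + 1 => fun u v => ∃ w, A u w ∧ relPow A k w v

/-- `distEq A u v k` : the directed distance from `u` to `v` is exactly `k`,
i.e. `k` is the length of a shortest directed path from `u` to `v`. -/
def distEq {V : Type*} (A : V → V → Prop) (u v : V) (k : ℕ) : Prop :=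
  relPow A k u v ∧ ∀ j < k, ¬ relPow A j u v

open Classical in
/-- The `D`-weight of vertex `u` under labeling `g`: the sum of the labels of all
vertices whose directed distance from `u` lies in `D`. -/
noncomputable def weightD {V : Type*} [Fintype V] (A : V → V → Prop) (D : Set ℕ)
    (g : V → ℕ) (u : V) : ℕ :=
  ∑ v : V, if ∃ k ∈ D, distEq A u v k then g v else 0

/-- A directed graph (given by its arc relation `A`) is `D`-antimagic if there is a
bijective labeling of the vertices with `{1, …, |V|}` whose `D`-weights are pairwise
distinct. -/
def IsDAntimagic {V : Type*} [Fintype V] (A : V → V → Prop) (D : Set ℕ) : Prop :=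
  ∃ g : V → ℕ, Set.BijOn g Set.univ (Set.Icc 1 (Fintype.card V)) ∧
    Function.Injective (weightD A D g)

/-- A vertex is a source if all its incident arcs are outgoing (no incoming arcs). -/
def IsSource {V : Type*} (A : V → V → Prop) (u : V) : Prop := ∀ v, ¬ A v u

/-- A vertex is a sink if all its incident arcs are incoming (no outgoing arcs). -/
def IsSink {V : Type*} (A : V → V → Prop) (u : V) : Prop := ∀ v, ¬ A u v

/-- The oriented star `K⃗_{1,n}`: vertices are `Option (Fin n)`, with `none` the center
and `some i` the leaves; `σ i = true` iff leaf `i` is a source (its arc points to the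
center), and `σ i = false` iff leaf `i` is a sink. -/
def starArc (n : ℕ) (σ : Fin n → Bool) :
    Option (Fin n) → Option (Fin n) → Prop :=
  fun u w => ∃ i : Fin n,
    (u = some i ∧ w = none ∧ σ i = true) ∨
    (u = none ∧ w = some i ∧ σ i = false)

section Aux
variable {V : Type*} (A : V → V → Prop)

lemma relPow_one (u v : V) : relPow A 1 u v ↔ A u v :=
  ⟨fun ⟨_, h, e⟩ => e ▸ h, fun h => ⟨v, h, rfl⟩⟩

lemma relPow_two (u v : V) : relPow A 2 u v ↔ ∃ w, A u w ∧ A w v :=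
  ⟨fun ⟨w, h, h2⟩ => ⟨w, h, (relPow_one A w v).1 h2⟩,
   fun ⟨w, h, h2⟩ => ⟨w, h, (relPow_one A w v).2 h2⟩⟩

lemma cond_iff (u v : V) :
    (∃ k ∈ ({1, 2} : Set ℕ), distEq A u v k) ↔
      u ≠ v ∧ (A u v ∨ ∃ w, A u w ∧ A w v) := by
  constructor
  · rintro ⟨k, hk, hpow, hmin⟩
    simp only [Set.mem_insert_iff, Set.mem_singleton_iff] at hk
    rcases hk with rfl | rfl
    · exact ⟨fun h => hmin 0 one_pos h, Or.inl ((relPow_one A u v).1 hpow)⟩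
    · exact ⟨fun h => hmin 0 (by norm_num) h, Or.inr ((relPow_two A u v).1 hpow)⟩
  · rintro ⟨hne, h | h⟩
    · refine ⟨1, by simp, (relPow_one A u v).2 h, ?_⟩
      intro j hj
      interval_cases j
      exact hne
    · by_cases hA : A u v
      · refine ⟨1, by simp, (relPow_one A u v).2 hA, ?_⟩
        intro j hj; interval_cases j; exact hne
      · refine ⟨2, by simp, (relPow_two A u v).2 h, ?_⟩
        intro j hj; interval_cases j
        · exact hne
        · exact fun hp => hA ((relPow_one A u v).1 hp)
end Aux
section Star
variable {n : ℕ} (σ : Fin n → Bool)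

lemma starArc_none_iff (v : Option (Fin n)) :
    starArc n σ none v ↔ ∃ j, v = some j ∧ σ j = false := by
  simp [starArc]

lemma starArc_some_iff (i : Fin n) (v : Option (Fin n)) :
    starArc n σ (some i) v ↔ (v = none ∧ σ i = true) := by
  simp [starArc]

/-- sum of labels of sink leaves -/
noncomputable def Ssum (g : Option (Fin n) → ℕ) : ℕ :=
  ∑ i : Fin n, if σ i = false then g (some i) else 0

lemma cond_none_iff (v : Option (Fin n)) :
    (∃ k ∈ ({1, 2} : Set ℕ), distEq (starArc n σ) none v k) ↔
      ∃ j, v = some j ∧ σ j = false := by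
  rw [cond_iff]
  constructor
  · rintro ⟨hne, h | ⟨w, hw, hwv⟩⟩
    · exact (starArc_none_iff σ v).1 h
    · obtain ⟨j, rfl, hσ⟩ := (starArc_none_iff σ w).1 hw
      obtain ⟨_, hσ'⟩ := (starArc_some_iff σ j v).1 hwv
      rw [hσ] at hσ'; exact absurd hσ' (by simp)
  · rintro ⟨j, rfl, hσ⟩
    exact ⟨by simp, Or.inl ((starArc_none_iff σ _).2 ⟨j, rfl, hσ⟩)⟩

lemma weight_none (g : Option (Fin n) → ℕ) :
    weightD (starArc n σ) {1, 2} g none = Ssum σ g := by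
  unfold weightD Ssum
  simp only [cond_none_iff]
  rw [Fintype.sum_option]
  simp

lemma cond_some_true_iff (i : Fin n) (hi : σ i = true) (v : Option (Fin n)) :
    (∃ k ∈ ({1, 2} : Set ℕ), distEq (starArc n σ) (some i) v k) ↔
      (v = none ∨ ∃ j, v = some j ∧ σ j = false) := by
  rw [cond_iff]
  constructor
  · rintro ⟨hne, h | ⟨w, hw, hwv⟩⟩
    · exact Or.inl ((starArc_some_iff σ i v).1 h).1
    · obtain ⟨rfl, _⟩ := (starArc_some_iff σ i w).1 hw
      exact Or.inr ((starArc_none_iff σ v).1 hwv)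
  · rintro (rfl | ⟨j, rfl, hσ⟩)
    · exact ⟨by simp, Or.inl ((starArc_some_iff σ i none).2 ⟨rfl, hi⟩)⟩
    · refine ⟨?_, Or.inr ⟨none, (starArc_some_iff σ i none).2 ⟨rfl, hi⟩,
        (starArc_none_iff σ _).2 ⟨j, rfl, hσ⟩⟩⟩
      intro h
      rw [Option.some.injEq] at h
      rw [← h, hi] at hσ
      exact absurd hσ (by simp)

lemma weight_some_true (g : Option (Fin n) → ℕ) (i : Fin n) (hi : σ i = true) :
    weightD (starArc n σ) {1, 2} g (some i) = g none + Ssum σ g := by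
  unfold weightD Ssum
  simp only [cond_some_true_iff σ i hi]
  rw [Fintype.sum_option]
  simp

lemma cond_some_false_iff (i : Fin n) (hi : σ i = false) (v : Option (Fin n)) :
    ¬ ∃ k ∈ ({1, 2} : Set ℕ), distEq (starArc n σ) (some i) v k := by
  rw [cond_iff]
  rintro ⟨hne, h | ⟨w, hw, _⟩⟩
  · obtain ⟨_, hσ⟩ := (starArc_some_iff σ i v).1 h
    rw [hi] at hσ; exact absurd hσ (by simp)
  · obtain ⟨_, hσ⟩ := (starArc_some_iff σ i w).1 hw
    rw [hi] at hσ; exact absurd hσ (by simp)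

lemma weight_some_false (g : Option (Fin n) → ℕ) (i : Fin n) (hi : σ i = false) :
    weightD (starArc n σ) {1, 2} g (some i) = 0 := by
  unfold weightD
  have h := cond_some_false_iff σ i hi
  simp only [fun v => eq_false (h v)]
  simp

end Star
lemma fin2_resolve {i₀ i₁ j : Fin 2} (h : i₀ ≠ i₁) (hj : j ≠ i₀) : j = i₁ := by
  have h1 : i₀.val ≠ i₁.val := fun e => h (Fin.ext e)
  have h2 : j.val ≠ i₀.val := fun e => hj (Fin.ext e)
  have := i₀.isLt; have := i₁.isLt; have := j.isLt
  exact Fin.ext (by omega)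

/-- For `n ≥ 2`, an oriented star `K⃗_{1,n}` is `{1,2}`-antimagic iff
`n = 2` and its center is neither a source nor a sink. -/
theorem orientedStar_oneTwo_antimagic_iff (n : ℕ) (hn : 2 ≤ n) (σ : Fin n → Bool) :
    IsDAntimagic (starArc n σ) {1, 2} ↔
      (n = 2 ∧ ¬ IsSource (starArc n σ) none ∧ ¬ IsSink (starArc n σ) none) := by
  constructor
  · rintro ⟨g, hbij, hinj⟩
    have hσinj : Function.Injective σ := by
      intro i j h
      have hw : weightD (starArc n σ) {1, 2} g (some i)
          = weightD (starArc n σ) {1, 2} g (some j) := by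
        cases hσi : σ i with
        | true =>
          rw [weight_some_true σ g i hσi, weight_some_true σ g j (h ▸ hσi)]
        | false =>
          rw [weight_some_false σ g i hσi, weight_some_false σ g j (h ▸ hσi)]
      exact Option.some.inj (hinj hw)
    have hcard : n ≤ 2 := by
      have := Fintype.card_le_of_injective σ hσinj
      simpa using this
    have hn2 : n = 2 := le_antisymm hcard hn
    have hσsurj : Function.Surjective σ := by
      refine Function.Injective.surjective_of_finite ?_ hσinj
      subst hn2
      exact Equiv.refl _ |>.trans (finTwoEquiv)
    obtain ⟨i₀, h0⟩ := hσsurj true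
    obtain ⟨i₁, h1⟩ := hσsurj false
    refine ⟨hn2, ?_, ?_⟩
    · intro hs
      exact hs (some i₀) ⟨i₀, Or.inl ⟨rfl, rfl, h0⟩⟩
    · intro hs
      exact hs (some i₁) ⟨i₁, Or.inr ⟨rfl, rfl, h1⟩⟩
  · rintro ⟨hn2, hns, hnk⟩
    subst hn2
    simp only [IsSource, not_forall, not_not] at hns
    simp only [IsSink, not_forall, not_not] at hnk
    obtain ⟨v, hv⟩ := hns
    obtain ⟨w, hw⟩ := hnk
    obtain ⟨i₀, h0⟩ : ∃ i, σ i = true := by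
      obtain ⟨i, hi | hi⟩ := hv
      · exact ⟨i, hi.2.2⟩
      · exact absurd hi.2.1 (by simp)
    obtain ⟨i₁, h1⟩ : ∃ i, σ i = false := by
      obtain ⟨i, hi | hi⟩ := hw
      · exact absurd hi.1 (by simp)
      · exact ⟨i, hi.2.2⟩
    have hne : i₀ ≠ i₁ := by
      intro h; rw [h, h1] at h0; exact absurd h0 (by simp)
    have htrue : ∀ j, σ j = true → j = i₀ := by
      intro j hj
      by_contra hcon
      have := fin2_resolve hne hcon
      rw [this, h1] at hj; exact absurd hj (by simp)
    have hfalse : ∀ j, σ j = false → j = i₁ := by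
      intro j hj
      apply fin2_resolve hne
      intro h; rw [h, h0] at hj; exact absurd hj (by simp)
    set g : Option (Fin 2) → ℕ := fun v => v.elim 1 (fun i => if i = i₀ then 2 else 3) with hg
    have hgnone : g none = 1 := rfl
    have hgi₀ : g (some i₀) = 2 := by simp [hg]
    have hgi₁ : g (some i₁) = 3 := by simp [hg, Ne.symm hne, hne.symm]
    have hcard3 : Fintype.card (Option (Fin 2)) = 3 := by simp
    have hS : Ssum σ g = 3 := by
      have hc : ∀ i : Fin 2, (σ i = false) ↔ (i = i₁) :=
        fun i => ⟨hfalse i, fun h => h ▸ h1⟩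
      unfold Ssum
      simp only [hc]
      rw [Finset.sum_ite_eq' Finset.univ i₁ (fun i => g (some i))]
      simp [hgi₁]
    refine ⟨g, ?_, ?_⟩
    · rw [hcard3]
      refine ⟨?_, ?_, ?_⟩
      · rintro (_ | i) _
        · simp [hgnone]
        · by_cases h : i = i₀ <;> simp [hg, h, Set.mem_Icc]
      · rintro (_ | i) _ (_ | j) _ h
        · rfl
        · by_cases hj : j = i₀ <;> simp [hg, hj] at h
        · by_cases hi : i = i₀ <;> simp [hg, hi] at h
        · by_cases hi : i = i₀ <;> by_cases hj : j = i₀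
          · rw [hi, hj]
          · simp [hg, hi, hj] at h
          · simp [hg, hi, hj] at h
          · rw [fin2_resolve hne hi, fin2_resolve hne hj]
      · intro m hm
        rw [Set.mem_Icc] at hm
        obtain ⟨hm1, hm2⟩ := hm
        interval_cases m
        · exact ⟨none, trivial, hgnone⟩
        · exact ⟨some i₀, trivial, hgi₀⟩
        · exact ⟨some i₁, trivial, hgi₁⟩
    · have wnone : weightD (starArc 2 σ) {1, 2} g none = 3 := by
        rw [weight_none σ g, hS]
      have wtrue : ∀ i, σ i = true → weightD (starArc 2 σ) {1, 2} g (some i) = 4 := by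
        intro i hi
        rw [weight_some_true σ g i hi, hS, hgnone]
      intro a b h
      match a, b with
      | none, none => rfl
      | none, some i =>
        cases hσi : σ i with
        | true => rw [wnone, wtrue i hσi] at h; omega
        | false => rw [wnone, weight_some_false σ g i hσi] at h; omega
      | some i, none =>
        cases hσi : σ i with
        | true => rw [wnone, wtrue i hσi] at h; omega
        | false => rw [wnone, weight_some_false σ g i hσi] at h; omega
      | some i, some j =>
        cases hσi : σ i with
        | true =>
          cases hσj : σ j with
          | true => rw [htrue i hσi, htrue j hσj]
          | false => rw [wtrue i hσi, weight_some_false σ g j hσj] at h; omega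
        | false =>
          cases hσj : σ j with
          | true => rw [wtrue j hσj, weight_some_false σ g i hσi] at h; omega
          | false => rw [hfalse i hσi, hfalse j hσj]
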